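/- Let q ≥ 1 and let θ belong to the closure of the invertible region D_θ. Then θ lies on the frontier of D_θ if and only if at least one coordinate of ζ = B⁻(θ) satisfies |ζ_i| = 1; equivalently, θ ∈ D_θ if and only if |ζ_i| < 1 for all i ∈ {1,…,q}. -/

import Mathlib

/-- Forward recursion for the Barndorff-Nielsen–Schou / Monahan transformation:
`fwdRow ζ k i = θ_{i,k}` (1-based), with `θ_{k,k} = ζ_k` and
`θ_{i,k} = θ_{i,k-1} - ζ_k * θ_{k-i,k-1}` for `1 ≤ i ≤ k-1`. -/
noncomputable def fwdRow (ζ : ℕ → ℝ) : ℕ → ℕ → ℝ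
  | 0 => fun _ => 0
  | (k+1) => fun i =>
      if i = k + 1 then ζ (k + 1)
      else fwdRow ζ k i - ζ (k + 1) * fwdRow ζ k (k + 1 - i)

open Classical in
/-- Reverse recursion: `(invAux q θ d).1` is row `q - d` (i.e. `θ_{·, q-d}`), and
`(invAux q θ d).2` is the proposition that `|θ_{j,j}| < 1` for all `j` with `q - d ≤ j ≤ q`.
Row `q-(d+1)` is given by `θ_{i,k-1} = (θ_{i,k} + θ_{k,k} θ_{k-i,k})/(1-θ_{k,k}^2)` with
`k = q - d` when the diagonal condition holds at all levels `≥ k`, and is `0` otherwise. -/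
noncomputable def invAux (q : ℕ) (θ : ℕ → ℝ) : ℕ → (ℕ → ℝ) × Prop
  | 0 => (θ, |θ q| < 1)
  | (d+1) =>
      let p := invAux q θ d
      let row : ℕ → ℝ := fun i =>
        if p.2 then (p.1 i + p.1 (q - d) * p.1 (q - d - i)) / (1 - (p.1 (q - d)) ^ 2)
        else 0
      (row, p.2 ∧ |row (q - d - 1)| < 1)

/-- Interpret a vector in `ℝ^q` as a 1-based sequence `ℕ → ℝ` (value `0` out of range). -/
def toSeq {q : ℕ} (v : Fin q → ℝ) : ℕ → ℝ :=
  fun n => if h : n - 1 < q then v ⟨n - 1, h⟩ else 0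

/-- The map `B : ℝ^q → ℝ^q`, `B(ζ)_i = θ_{i,q}`. -/
noncomputable def Bmap {q : ℕ} (ζ : Fin q → ℝ) : Fin q → ℝ :=
  fun i => fwdRow (toSeq ζ) q (i.1 + 1)

/-- The map `B⁻ : ℝ^q → ℝ^q`, `B⁻(θ)_i = θ_{i,i}` computed by the reverse recursion. -/
noncomputable def Binv {q : ℕ} (θ : Fin q → ℝ) : Fin q → ℝ :=
  fun i => (invAux q (toSeq θ) (q - (i.1 + 1))).1 (i.1 + 1)

/-- The invertible region `D_θ ⊆ ℝ^q`: all complex roots of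
`θ(z) = 1 - θ_1 z - ⋯ - θ_q z^q` satisfy `|z| > 1`. -/
def invRegion (q : ℕ) : Set (Fin q → ℝ) :=
  {θ | ∀ z : ℂ, 1 - ∑ i : Fin q, (θ i : ℂ) * z ^ (i.1 + 1) = 0 → 1 < ‖z‖}

/-- The open unit cube `D_ζ = (-1,1)^q ⊆ ℝ^q`. -/
def openCube (q : ℕ) : Set (Fin q → ℝ) :=
  {ζ | ∀ i, ζ i ∈ Set.Ioo (-1 : ℝ) 1}


open Finset

noncomputable def Apoly (k : ℕ) (θ : ℕ → ℝ) : ℂ → ℂ :=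
  fun z => 1 - ∑ i ∈ Finset.range k, (θ (i+1) : ℂ) * z ^ (i+1)

noncomputable def Rev (k : ℕ) (c : ℕ → ℝ) : ℂ → ℂ :=
  fun z => z ^ k - ∑ i ∈ Finset.range k, (c (i+1) : ℂ) * z ^ (k-1-i)

def Stable (k : ℕ) (θ : ℕ → ℝ) : Prop :=
  ∀ z : ℂ, ‖z‖ ≤ 1 → Apoly k θ z ≠ 0

lemma Apoly_diff (k : ℕ) (θ : ℕ → ℝ) : Differentiable ℂ (Apoly k θ) := by
  unfold Apoly
  exact (differentiable_const _).sub <| Differentiable.fun_sum fun i _ =>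
    (differentiable_const _).mul (differentiable_pow _)

lemma Rev_diff (k : ℕ) (c : ℕ → ℝ) : Differentiable ℂ (Rev k c) := by
  unfold Rev
  exact (differentiable_pow _).sub <| Differentiable.fun_sum fun i _ =>
    (differentiable_const _).mul (differentiable_pow _)

lemma Rev_circle {k : ℕ} {c : ℕ → ℝ} {z : ℂ} (hz : ‖z‖ = 1) :
    Rev k c z = z ^ k * (starRingEnd ℂ) (Apoly k c z) := by
  have hz0 : z ≠ 0 := by
    intro h; rw [h] at hz; simp at hz
  have hconj : (starRingEnd ℂ) z = z⁻¹ := by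
    have h1 : z * (starRingEnd ℂ) z = 1 := by
      rw [Complex.mul_conj]
      norm_cast
      rw [Complex.normSq_eq_norm_sq, hz]; norm_num
    field_simp at h1 ⊢
    linear_combination h1
  unfold Rev Apoly
  rw [map_sub, map_one, map_sum, mul_sub, mul_one, Finset.mul_sum]
  congr 1
  apply Finset.sum_congr rfl
  intro i hi
  rw [Finset.mem_range] at hi
  rw [map_mul, map_pow, hconj, Complex.conj_ofReal]
  rw [mul_left_comm]
  congr 1
  have hik : i + 1 ≤ k := hi
  have : z ^ k = z ^ (k - 1 - i) * z ^ (i+1) := by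
    rw [← pow_add]; congr 1; omega
  rw [this, mul_assoc, ← mul_pow, mul_inv_cancel₀ hz0, one_pow, mul_one]

lemma Rev_abs_circle {k : ℕ} {c : ℕ → ℝ} {z : ℂ} (hz : ‖z‖ = 1) :
    ‖Rev k c z‖ = ‖Apoly k c z‖ := by
  rw [Rev_circle hz, norm_mul, norm_pow, hz, one_pow, one_mul, Complex.norm_conj]

/-- Maximum modulus: if `P` has no zeros in the closed unit disk and `|Q| = |P|`
on the circle, then `|Q| ≤ |P|` on the closed disk. -/
lemma key_ineq {P Q : ℂ → ℂ} (hP : Differentiable ℂ P) (hQ : Differentiable ℂ Q)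
    (hPne : ∀ z : ℂ, ‖z‖ ≤ 1 → P z ≠ 0)
    (hPQ : ∀ z : ℂ, ‖z‖ = 1 → ‖Q z‖ = ‖P z‖)
    {z : ℂ} (hz : ‖z‖ ≤ 1) : ‖Q z‖ ≤ ‖P z‖ := by
  set f : ℂ → ℂ := fun w => Q w / P w with hf
  have hcl : closure (Metric.ball (0:ℂ) 1) = Metric.closedBall 0 1 := closure_ball 0 one_ne_zero
  have hmem : ∀ w : ℂ, w ∈ Metric.closedBall (0:ℂ) 1 → ‖w‖ ≤ 1 := by
    intro w hw; simpa [Complex.dist_eq] using Metric.mem_closedBall.mp hw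
  have hd : DiffContOnCl ℂ f (Metric.ball 0 1) := by
    constructor
    · exact (hQ.differentiableOn).div (hP.differentiableOn)
        (fun w hw => hPne w (le_of_lt (by simpa [Complex.dist_eq] using Metric.mem_ball.mp hw)))
    · rw [hcl]
      exact (hQ.continuous.continuousOn).div (hP.continuous.continuousOn)
        (fun w hw => hPne w (hmem w hw))
  have hb : ∀ w ∈ frontier (Metric.ball (0:ℂ) 1), ‖f w‖ ≤ 1 := by
    intro w hw
    rw [frontier_ball 0 one_ne_zero] at hw
    have hw1 : ‖w‖ = 1 := by simpa [Complex.dist_eq] using hw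
    have := hPQ w hw1
    simp only [hf, norm_div, this]
    exact div_self_le_one _
  have hzc : z ∈ closure (Metric.ball (0:ℂ) 1) := by
    rw [hcl]; simpa [Complex.dist_eq] using hz
  have := Complex.norm_le_of_forall_mem_frontier_norm_le Metric.isBounded_ball hd hb hzc
  simp only [hf, norm_div] at this
  have hpos : 0 < ‖P z‖ :=
    norm_pos_iff.mpr (hPne z hz)
  calc ‖Q z‖ = ‖Q z‖ / ‖P z‖ * ‖P z‖ := by
        field_simp
    _ ≤ 1 * ‖P z‖ := by
        apply mul_le_mul_of_nonneg_right this (le_of_lt hpos)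
    _ = _ := one_mul _

lemma reflect_sum (m : ℕ) (b : ℕ → ℝ) (z : ℂ) :
    ∑ i ∈ Finset.range m, (b (m-i) : ℂ) * z ^ (i+1)
      = ∑ i ∈ Finset.range m, (b (i+1) : ℂ) * z ^ (m-i) := by
  rw [← Finset.sum_range_reflect (fun i => (b (i+1) : ℂ) * z ^ (m-i)) m]
  apply Finset.sum_congr rfl
  intro j hj; rw [Finset.mem_range] at hj
  have h1 : m - 1 - j + 1 = m - j := by omega
  have h2 : m - (m - 1 - j) = j + 1 := by omega
  rw [h1, h2]

lemma decomp_fwd (m : ℕ) (a b : ℕ → ℝ) (ζ : ℝ)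
    (hai : ∀ i, 1 ≤ i → i ≤ m → a i = b i - ζ * b (m+1-i)) (hak : a (m+1) = ζ) (z : ℂ) :
    Apoly (m+1) a z = Apoly m b z - (ζ : ℂ) * (z * Rev m b z) := by
  unfold Apoly Rev
  rw [Finset.sum_range_succ, hak]
  have hs : ∀ i ∈ Finset.range m, (a (i+1) : ℂ) * z ^ (i+1)
      = ((b (i+1) : ℂ) - (ζ:ℂ) * (b (m-i) : ℂ)) * z ^ (i+1) := by
    intro i hi; rw [Finset.mem_range] at hi
    have := hai (i+1) (by omega) (by omega)
    have hmi : m + 1 - (i+1) = m - i := by omega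
    rw [hmi] at this
    rw [this]; push_cast; ring
  rw [Finset.sum_congr rfl hs]
  have hrefl := reflect_sum m b z
  simp only [sub_mul, Finset.sum_sub_distrib]
  rw [mul_sub, Finset.mul_sum]
  have : ∀ i ∈ Finset.range m, (ζ:ℂ) * (b (m-i):ℂ) * z ^ (i+1)
      = (ζ:ℂ) * ((b (m-i):ℂ) * z ^ (i+1)) := fun i _ => by ring
  rw [Finset.sum_congr rfl this, ← Finset.mul_sum, hrefl]
  rw [mul_sub, Finset.mul_sum]
  have hz : ∀ i ∈ Finset.range m, z * ((b (i+1):ℂ) * z ^ (m-1-i))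
      = (b (i+1):ℂ) * z ^ (m-i) := by
    intro i hi; rw [Finset.mem_range] at hi
    have : m - i = (m-1-i) + 1 := by omega
    rw [this, pow_succ]; ring
  rw [Finset.sum_congr rfl hz]
  have hzp : z * z ^ m = z ^ (m+1) := by rw [pow_succ]; ring
  rw [hzp, ← Finset.mul_sum]
  ring

lemma decomp_bwd (m : ℕ) (a : ℕ → ℝ) (ζ : ℝ) (hak : a (m+1) = ζ)
    (hne : (1:ℝ) - ζ^2 ≠ 0) (z : ℂ) :
    Apoly m (fun i => (a i + ζ * a (m+1-i))/(1-ζ^2)) z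
      = (Apoly (m+1) a z + (ζ:ℂ) * Rev (m+1) a z) / ((1:ℂ)-(ζ:ℂ)^2) := by
  have hneC : ((1:ℂ) - (ζ:ℂ)^2) ≠ 0 := by
    intro h
    apply hne
    have : ((1 - ζ^2 : ℝ) : ℂ) = 0 := by push_cast; linear_combination h
    exact_mod_cast this
  rw [eq_div_iff hneC]
  unfold Apoly Rev
  rw [Finset.sum_range_succ, Finset.sum_range_succ, hak]
  have he : ∀ i ∈ Finset.range m, (m + 1 - 1 - i) = m - i := fun i _ => by omega
  have hsum2 : ∑ i ∈ Finset.range m, (a (i+1) : ℂ) * z ^ (m+1-1-i)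
      = ∑ i ∈ Finset.range m, (a (i+1) : ℂ) * z ^ (m-i) := by
    apply Finset.sum_congr rfl; intro i hi; rw [he i hi]
  have hlast : (m + 1 - 1 - m) = 0 := by omega
  rw [hlast]
  have hs : ∀ i ∈ Finset.range m,
      ((((fun i => (a i + ζ * a (m+1-i))/(1-ζ^2)) (i+1) : ℝ)) : ℂ) * z ^ (i+1)
      = (((a (i+1) : ℂ) + (ζ:ℂ) * (a (m-i) : ℂ)) / ((1:ℂ)-(ζ:ℂ)^2)) * z ^ (i+1) := by
    intro i hi; rw [Finset.mem_range] at hi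
    have hmi : m + 1 - (i+1) = m - i := by omega
    simp only [hmi]
    push_cast
    ring
  rw [Finset.sum_congr rfl hs, hsum2]
  have hrefl := reflect_sum m a z
  rw [sub_mul, one_mul, Finset.sum_mul]
  have hterm : ∀ i ∈ Finset.range m,
      ((((a (i+1) : ℂ) + (ζ:ℂ) * (a (m-i) : ℂ)) / ((1:ℂ)-(ζ:ℂ)^2)) * z ^ (i+1)) * ((1:ℂ)-(ζ:ℂ)^2)
      = ((a (i+1) : ℂ) + (ζ:ℂ) * (a (m-i) : ℂ)) * z ^ (i+1) := by
    intro i _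
    field_simp
  rw [Finset.sum_congr rfl hterm]
  have hsplit : ∑ x ∈ Finset.range m, ((a (x+1):ℂ) + (ζ:ℂ) * (a (m-x):ℂ)) * z ^ (x+1)
      = (∑ x ∈ Finset.range m, (a (x+1):ℂ) * z^(x+1))
        + (ζ:ℂ) * ∑ x ∈ Finset.range m, (a (m-x):ℂ) * z^(x+1) := by
    rw [Finset.mul_sum, ← Finset.sum_add_distrib]
    apply Finset.sum_congr rfl; intro i _; ring
  rw [hsplit, hrefl]
  push_cast
  ring

lemma step_fwd (m : ℕ) (a b : ℕ → ℝ) (ζ : ℝ)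
    (hai : ∀ i, 1 ≤ i → i ≤ m → a i = b i - ζ * b (m+1-i)) (hak : a (m+1) = ζ)
    (hζ : |ζ| < 1) (hb : Stable m b) : Stable (m+1) a := by
  intro z hz
  rw [decomp_fwd m a b ζ hai hak z]
  intro h
  have hPpos : 0 < ‖Apoly m b z‖ := norm_pos_iff.mpr (hb z hz)
  have hQ : ‖z * Rev m b z‖ ≤ ‖Apoly m b z‖ := by
    have := key_ineq (P := Apoly m b) (Q := fun w => w * Rev m b w)
      (Apoly_diff m b) (differentiable_id.mul (Rev_diff m b)) hb
      (fun w hw => by rw [norm_mul, hw, one_mul, Rev_abs_circle hw]) hz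
    exact this
  have habs : ‖(ζ:ℂ) * (z * Rev m b z)‖ < ‖Apoly m b z‖ := by
    rw [norm_mul]
    have hzr : ‖(ζ:ℂ)‖ = |ζ| := Complex.norm_real ζ
    rw [hzr]
    calc |ζ| * ‖z * Rev m b z‖ ≤ |ζ| * ‖Apoly m b z‖ :=
          mul_le_mul_of_nonneg_left hQ (abs_nonneg ζ)
      _ < 1 * ‖Apoly m b z‖ := by
          apply mul_lt_mul_of_pos_right hζ hPpos
      _ = _ := one_mul _
  rw [sub_eq_zero] at h
  rw [← h] at habs
  exact lt_irrefl _ habs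

lemma step_bwd (m : ℕ) (a : ℕ → ℝ) (ζ : ℝ) (hak : a (m+1) = ζ) (hζ : |ζ| < 1)
    (ha : Stable (m+1) a) :
    Stable m (fun i => (a i + ζ * a (m+1-i))/(1-ζ^2)) := by
  have hne : (1:ℝ) - ζ^2 ≠ 0 := by
    have : ζ^2 < 1 := by
      have := abs_lt.mp hζ
      nlinarith [this.1, this.2]
    intro h; linarith
  intro z hz
  rw [decomp_bwd m a ζ hak hne z]
  intro h
  have hneC : ((1:ℂ) - (ζ:ℂ)^2) ≠ 0 := by
    intro hh
    apply hne
    have : ((1 - ζ^2 : ℝ) : ℂ) = 0 := by push_cast; linear_combination hh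
    exact_mod_cast this
  rw [div_eq_zero_iff] at h
  rcases h with h | h
  swap
  · exact hneC h
  have hPpos : 0 < ‖Apoly (m+1) a z‖ := norm_pos_iff.mpr (ha z hz)
  have hQ : ‖Rev (m+1) a z‖ ≤ ‖Apoly (m+1) a z‖ :=
    key_ineq (Apoly_diff (m+1) a) (Rev_diff (m+1) a) ha
      (fun w hw => Rev_abs_circle hw) hz
  have habs : ‖(ζ:ℂ) * Rev (m+1) a z‖ < ‖Apoly (m+1) a z‖ := by
    rw [norm_mul, Complex.norm_real, Real.norm_eq_abs]
    calc |ζ| * ‖Rev (m+1) a z‖ ≤ |ζ| * ‖Apoly (m+1) a z‖ :=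
          mul_le_mul_of_nonneg_left hQ (abs_nonneg ζ)
      _ < 1 * ‖Apoly (m+1) a z‖ := mul_lt_mul_of_pos_right hζ hPpos
      _ = _ := one_mul _
  have : Apoly (m+1) a z = - ((ζ:ℂ) * Rev (m+1) a z) := by linear_combination h
  rw [this, norm_neg] at habs
  exact lt_irrefl _ habs

open Polynomial in
lemma step_coeff (m : ℕ) (a : ℕ → ℝ) (ha : Stable (m+1) a) : |a (m+1)| < 1 := by
  by_cases h0 : a (m+1) = 0
  · rw [h0]; norm_num
  set k := m + 1 with hk
  set p : Polynomial ℂ := 1 - ∑ i ∈ Finset.range k, C ((a (i+1) : ℂ)) * X ^ (i+1) with hp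
  have heval : ∀ z : ℂ, p.eval z = Apoly k a z := by
    intro z
    simp only [hp, Apoly, eval_sub, eval_one, eval_finset_sum, eval_mul, eval_C, eval_pow, eval_X]
  have hcoeff : ∀ n, 1 ≤ n → p.coeff n = -(if n ≤ k then (a n : ℂ) else 0) := by
    intro n hn
    rw [hp, coeff_sub, coeff_one, Polynomial.finset_sum_coeff]
    simp only [coeff_C_mul, coeff_X_pow]
    rw [if_neg (by omega)]
    rw [zero_sub]
    congr 1
    by_cases hnk : n ≤ k
    · rw [if_pos hnk]
      rw [Finset.sum_eq_single (n-1)]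
      · rw [if_pos (by omega)]
        have : n - 1 + 1 = n := by omega
        rw [this, mul_one]
      · intro i hi hne
        rw [if_neg (by omega), mul_zero]
      · intro hni
        rw [Finset.mem_range] at hni
        omega
    · rw [if_neg hnk]
      apply Finset.sum_eq_zero
      intro i hi
      rw [Finset.mem_range] at hi
      rw [if_neg (by omega), mul_zero]
  have hcoeffk : p.coeff k = -(a k : ℂ) := by
    rw [hcoeff k (by omega), if_pos le_rfl]
  have hcknz : p.coeff k ≠ 0 := by
    rw [hcoeffk]
    simp only [ne_eq, neg_eq_zero, Complex.ofReal_eq_zero]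
    exact h0
  have hdegle : p.natDegree ≤ k := by
    apply Polynomial.natDegree_le_iff_coeff_eq_zero.mpr
    intro n hn
    rw [hcoeff n (by omega), if_neg (by omega), neg_zero]
  have hdeg : p.natDegree = k := le_antisymm hdegle (Polynomial.le_natDegree_of_ne_zero hcknz)
  have hlead : p.leadingCoeff = -(a k : ℂ) := by
    rw [Polynomial.leadingCoeff, hdeg, hcoeffk]
  have hsplit : p.roots.card = p.natDegree :=
    (Polynomial.splits_iff_card_roots).mp (IsAlgClosed.splits p)
  have hprod := Polynomial.C_leadingCoeff_mul_prod_multiset_X_sub_C hsplit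
  have heval0 : p.eval 0 = 1 := by
    have := heval 0
    rw [this]
    unfold Apoly
    have : ∀ i ∈ Finset.range k, (a (i+1) : ℂ) * (0:ℂ) ^ (i+1) = 0 := by
      intro i _; rw [zero_pow (by omega), mul_zero]
    rw [Finset.sum_congr rfl this, Finset.sum_const_zero, sub_zero]
  -- roots have abs > 1
  have hroots : ∀ r ∈ p.roots, 1 < ‖r‖ := by
    intro r hr
    by_contra hle
    push_neg at hle
    have : p.eval r = 0 := by
      have := Polynomial.isRoot_of_mem_roots hr
      exact this
    rw [heval r] at this
    exact ha r hle this
  -- evaluate product formula at 0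
  have h1 : p.leadingCoeff * ((p.roots.map fun r => -r).prod) = 1 := by
    have := congrArg (Polynomial.eval 0) hprod
    rw [heval0] at this
    rw [Polynomial.eval_mul, Polynomial.eval_C] at this
    rw [Polynomial.eval_multiset_prod] at this
    rw [Multiset.map_map] at this
    convert this using 3
    congr 1
    ext r
    simp
  have habs : ‖p.leadingCoeff‖ * ((p.roots.map fun r => ‖r‖).prod) = 1 := by
    have := congrArg norm h1
    rw [norm_mul, norm_one] at this
    rw [← this]
    congr 1
    rw [show ‖(p.roots.map fun r => -r).prod‖ = ((p.roots.map fun r => -r).map norm).prod from map_multiset_prod (normHom (α := ℂ)) _, Multiset.map_map]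
    congr 1
    ext r
    simp
  have hcard : (p.roots.map fun r => ‖r‖).card = k := by
    rw [Multiset.card_map, hsplit, hdeg]
  have hprodgt : 1 < ((p.roots.map fun r => ‖r‖).prod) := by
    have hne : (p.roots.map fun r => ‖r‖) ≠ 0 := by
      intro h
      rw [h] at hcard
      simp at hcard
    obtain ⟨x, hx⟩ := Multiset.exists_mem_of_ne_zero hne
    obtain ⟨s, hs⟩ := Multiset.exists_cons_of_mem hx
    rw [hs, Multiset.prod_cons]
    have hx1 : 1 < x := by
      obtain ⟨r, hr, hrx⟩ := Multiset.mem_map.mp hx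
      rw [← hrx]; exact hroots r hr
    have hs1 : (1:ℝ) ≤ s.prod := by
      apply Multiset.one_le_prod
      intro y hy
      have hy' : y ∈ p.roots.map fun r => ‖r‖ := by
        rw [hs]; exact Multiset.mem_cons_of_mem hy
      obtain ⟨r, hr, hry⟩ := Multiset.mem_map.mp hy'
      rw [← hry]; exact le_of_lt (hroots r hr)
    nlinarith
  have hlabs : ‖p.leadingCoeff‖ = |a k| := by
    rw [hlead, norm_neg, Complex.norm_real, Real.norm_eq_abs]
  rw [hlabs] at habs
  nlinarith [abs_nonneg (a k)]

noncomputable def dstep (k : ℕ) (a : ℕ → ℝ) : ℕ → ℝ :=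
  fun i => (a i + a k * a (k-i)) / (1 - (a k)^2)

noncomputable def rows (q : ℕ) (θ : ℕ → ℝ) : ℕ → (ℕ → ℝ)
  | 0 => θ
  | (d+1) => dstep (q-d) (rows q θ d)

lemma rows_shift (q : ℕ) (θ : ℕ → ℝ) : ∀ e, rows (q+1) θ (e+1) = rows q (dstep (q+1) θ) e := by
  intro e
  induction e with
  | zero => simp [rows]
  | succ e ih =>
      show dstep (q+1-(e+1)) (rows (q+1) θ (e+1)) = dstep (q-e) (rows q (dstep (q+1) θ) e)
      rw [ih]
      have h : q+1-(e+1) = q-e := by omega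
      rw [h]

lemma one_sub_sq_ne {ζ : ℝ} (hζ : |ζ| < 1) : (1:ℝ) - ζ^2 ≠ 0 := by
  have := abs_lt.mp hζ
  nlinarith [this.1, this.2]

theorem schur_cohn (q : ℕ) (θ : ℕ → ℝ) :
    Stable q θ ↔ ∀ j, 1 ≤ j → j ≤ q → |rows q θ (q-j) j| < 1 := by
  induction q generalizing θ with
  | zero =>
      constructor
      · intro _ j h1 h2; exact absurd h2 (by omega)
      · intro _ z _
        unfold Apoly
        simp
  | succ q ih =>
      set ζ := θ (q+1) with hζdef
      set b := dstep (q+1) θ with hbdef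
      constructor
      · intro h j h1 h2
        have hζ : |ζ| < 1 := step_coeff q θ h
        have hb : Stable q b := by
          have := step_bwd q θ ζ rfl hζ h
          exact this
        rcases Nat.eq_or_lt_of_le h2 with heq | hlt
        · rw [heq]
          simpa [rows] using hζ
        · have hjq : j ≤ q := by omega
          have : q + 1 - j = (q - j) + 1 := by omega
          rw [this, rows_shift]
          exact (ih b).mp hb j h1 hjq
      · intro h
        have hζ : |ζ| < 1 := by
          have := h (q+1) (by omega) le_rfl
          simpa [rows] using this
        have hne := one_sub_sq_ne hζ
        have hb : Stable q b := by
          apply (ih b).mpr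
          intro j h1 h2
          have : q + 1 - j = (q - j) + 1 := by omega
          have hh := h j h1 (by omega)
          rw [this, rows_shift] at hh
          exact hh
        apply step_fwd q θ b ζ _ rfl hζ hb
        intro i hi1 hi2
        have hidx : q + 1 - (q + 1 - i) = i := by omega
        show θ i = b i - ζ * b (q+1-i)
        rw [hbdef]
        unfold dstep
        rw [hidx, ← hζdef]
        field_simp
        ring

lemma toSeq_apply {q : ℕ} (θ : Fin q → ℝ) (i : Fin q) : toSeq θ (i.1 + 1) = θ i := by
  unfold toSeq
  have h : i.1 + 1 - 1 < q := by simpa using i.2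
  rw [dif_pos h]
  congr 1

lemma invRegion_iff_stable {q : ℕ} (θ : Fin q → ℝ) :
    θ ∈ invRegion q ↔ Stable q (toSeq θ) := by
  have hsum : ∀ z : ℂ, (∑ i : Fin q, (θ i : ℂ) * z ^ (i.1 + 1))
      = ∑ i ∈ Finset.range q, (toSeq θ (i+1) : ℂ) * z ^ (i+1) := by
    intro z
    rw [← Fin.sum_univ_eq_sum_range (fun i => (toSeq θ (i+1) : ℂ) * z ^ (i+1)) q]
    apply Finset.sum_congr rfl
    intro i _
    rw [toSeq_apply]
  constructor
  · intro h z hz hzero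
    have : (1:ℂ) - ∑ i : Fin q, (θ i : ℂ) * z ^ (i.1 + 1) = 0 := by
      rw [hsum]
      exact hzero
    exact absurd hz (not_le.mpr (h z this))
  · intro h z hz
    by_contra hle
    push_neg at hle
    apply h z hle
    unfold Apoly
    rw [← hsum]
    exact hz

def CondA (q : ℕ) (θ : ℕ → ℝ) (d : ℕ) : Prop := ∀ e ≤ d, |rows q θ e (q - e)| < 1

open Classical in
lemma invAux_spec (q : ℕ) (θ : ℕ → ℝ) : ∀ d,
    ((invAux q θ d).2 ↔ CondA q θ d) ∧
    ((∀ e < d, |rows q θ e (q - e)| < 1) → (invAux q θ d).1 = rows q θ d) := by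
  intro d
  induction d with
  | zero =>
      constructor
      · show |θ q| < 1 ↔ CondA q θ 0
        constructor
        · intro h e he
          have : e = 0 := by omega
          rw [this]
          show |rows q θ 0 (q-0)| < 1
          show |θ (q-0)| < 1
          simpa using h
        · intro h
          have := h 0 le_rfl
          show |θ q| < 1
          simpa [rows] using this
      · intro _
        rfl
  | succ d ih =>
      obtain ⟨ih2, ih1⟩ := ih
      by_cases hc : CondA q θ d
      · have hp2 : (invAux q θ d).2 := ih2.mpr hc
        have hp1 : (invAux q θ d).1 = rows q θ d := ih1 (fun e he => hc e (by omega))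
        have hrow : (invAux q θ (d+1)).1 = rows q θ (d+1) := by
          show (fun i => if (invAux q θ d).2 then
              ((invAux q θ d).1 i + (invAux q θ d).1 (q-d) * (invAux q θ d).1 (q-d-i))
                / (1 - ((invAux q θ d).1 (q-d))^2) else 0) = rows q θ (d+1)
          funext i
          rw [if_pos hp2, hp1]
          rfl
        constructor
        · show ((invAux q θ d).2 ∧
              |(invAux q θ (d+1)).1 (q - d - 1)| < 1) ↔ CondA q θ (d+1)
          rw [hrow]
          constructor
          · rintro ⟨_, hlt⟩ e he
            rcases Nat.lt_or_ge e (d+1) with h' | h'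
            · exact hc e (by omega)
            · have : e = d + 1 := by omega
              rw [this]
              have : q - d - 1 = q - (d+1) := by omega
              rw [this] at hlt
              exact hlt
          · intro h
            refine ⟨hp2, ?_⟩
            have := h (d+1) le_rfl
            have heq : q - d - 1 = q - (d+1) := by omega
            rw [heq]
            exact this
        · intro h
          exact hrow
      · have hp2 : ¬ (invAux q θ d).2 := fun h => hc (ih2.mp h)
        constructor
        · show ((invAux q θ d).2 ∧ _) ↔ CondA q θ (d+1)
          constructor
          · rintro ⟨h, _⟩
            exact absurd h hp2
          · intro h
            exact absurd (fun e he => h e (by omega)) hc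
        · intro h
          exact absurd (fun e he => h e (by omega)) hc


lemma binv_eq {q : ℕ} (θ : Fin q → ℝ) (i : Fin q)
    (h : ∀ e < q - (i.1+1), |rows q (toSeq θ) e (q - e)| < 1) :
    Binv θ i = rows q (toSeq θ) (q - (i.1+1)) (i.1+1) := by
  unfold Binv
  rw [(invAux_spec q (toSeq θ) (q - (i.1+1))).2 h]

lemma all_diag_lt {q : ℕ} (θ : Fin q → ℝ) (h : ∀ i, |Binv θ i| < 1) :
    ∀ d, d < q → |rows q (toSeq θ) d (q - d)| < 1 := by
  intro d
  induction d using Nat.strong_induction_on with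
  | _ d ih =>
      intro hdq
      set i : Fin q := ⟨q - d - 1, by omega⟩ with hidef
      have hi1 : i.1 + 1 = q - d := by simp [hidef]; omega
      have hqd : q - (i.1 + 1) = d := by omega
      have hcond : ∀ e < q - (i.1+1), |rows q (toSeq θ) e (q - e)| < 1 := by
        rw [hqd]
        intro e he
        exact ih e he (by omega)
      have := binv_eq θ i hcond
      rw [hqd, hi1] at this
      have hb := h i
      rw [this] at hb
      exact hb

lemma stable_iff_binv {q : ℕ} (θ : Fin q → ℝ) :
    Stable q (toSeq θ) ↔ ∀ i, |Binv θ i| < 1 := by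
  constructor
  · intro h i
    have hall := (schur_cohn q (toSeq θ)).mp h
    have hcond : ∀ e < q - (i.1+1), |rows q (toSeq θ) e (q - e)| < 1 := by
      intro e he
      have h1 : 1 ≤ q - e := by omega
      have h2 : q - e ≤ q := by omega
      have := hall (q - e) h1 h2
      have heq : q - (q - e) = e := by omega
      rw [heq] at this
      exact this
    rw [binv_eq θ i hcond]
    have h1 : 1 ≤ i.1 + 1 := by omega
    have h2 : i.1 + 1 ≤ q := i.2
    exact hall (i.1+1) h1 h2
  · intro h
    apply (schur_cohn q (toSeq θ)).mpr
    intro j h1 h2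
    have hd : q - j < q := by omega
    have := all_diag_lt θ h (q - j) hd
    have heq : q - (q - j) = j := by omega
    rw [heq] at this
    exact this

lemma invRegion_iff_binv {q : ℕ} (θ : Fin q → ℝ) :
    θ ∈ invRegion q ↔ ∀ i, |Binv θ i| < 1 :=
  (invRegion_iff_stable θ).trans (stable_iff_binv θ)

lemma isOpen_invRegion (q : ℕ) : IsOpen (invRegion q) := by
  rw [Metric.isOpen_iff]
  intro θ hθ
  set g : ℂ → ℝ := fun z => ‖1 - ∑ i : Fin q, (θ i : ℂ) * z ^ (i.1+1)‖ with hg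
  have hgc : Continuous g := by
    apply continuous_norm.comp
    exact (continuous_const.sub (continuous_finset_sum _ fun i _ =>
      continuous_const.mul (continuous_pow _)))
  obtain ⟨z₀, hz₀K, hmin'⟩ := (isCompact_closedBall (0:ℂ) 1).exists_isMinOn
    ⟨0, Metric.mem_closedBall_self zero_le_one⟩ hgc.continuousOn
  have hmin : ∀ z ∈ Metric.closedBall (0:ℂ) 1, g z₀ ≤ g z := fun z hz => hmin' hz
  set c := g z₀ with hc
  have hcpos : 0 < c := by
    rcases lt_or_eq_of_le (norm_nonneg (_ : ℂ)) with h | h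
    · exact h
    · exfalso
      have hzero : (1:ℂ) - ∑ i : Fin q, (θ i : ℂ) * z₀ ^ (i.1+1) = 0 :=
        norm_eq_zero.mp h.symm
      have := hθ z₀ hzero
      have hz₀ : ‖z₀‖ ≤ 1 := by
        simpa [Complex.dist_eq] using Metric.mem_closedBall.mp hz₀K
      linarith
  refine ⟨c / (q+1), by positivity, ?_⟩
  intro θ' hθ'
  rw [Metric.mem_ball] at hθ'
  intro z hzero
  by_contra hle
  push_neg at hle
  have hzK : z ∈ Metric.closedBall (0:ℂ) 1 := by
    simpa [Complex.dist_eq] using hle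
  have hgz : c ≤ g z := hmin z hzK
  have hdiff : ‖(1 - ∑ i : Fin q, (θ' i : ℂ) * z ^ (i.1+1))
      - (1 - ∑ i : Fin q, (θ i : ℂ) * z ^ (i.1+1))‖
      ≤ q * (c / (q+1)) := by
    have h1 : (1 - ∑ i : Fin q, (θ' i : ℂ) * z ^ (i.1+1))
        - (1 - ∑ i : Fin q, (θ i : ℂ) * z ^ (i.1+1))
        = ∑ i : Fin q, (((θ i : ℂ) - θ' i) * z ^ (i.1+1)) := by
      have hsplit : ∑ i : Fin q, (((θ i : ℂ) - θ' i) * z ^ (i.1+1))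
          = (∑ i : Fin q, (θ i:ℂ)*z^(i.1+1)) - ∑ i : Fin q, (θ' i:ℂ)*z^(i.1+1) := by
        rw [← Finset.sum_sub_distrib]
        apply Finset.sum_congr rfl
        intro i _
        ring
      rw [hsplit]
      ring
    rw [h1]
    calc ‖∑ i : Fin q, (((θ i : ℂ) - θ' i) * z ^ (i.1+1))‖
        ≤ ∑ i : Fin q, ‖((θ i : ℂ) - θ' i) * z ^ (i.1+1)‖ :=
          norm_sum_le _ _
      _ ≤ ∑ _i : Fin q, (c / (q+1)) := by
          apply Finset.sum_le_sum
          intro i _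
          rw [norm_mul, norm_pow]
          have hz1 : ‖z‖ ≤ 1 := hle
          have habs : ‖(θ i : ℂ) - θ' i‖ ≤ c / (q+1) := by
            have : ((θ i : ℂ) - θ' i) = ((θ i - θ' i : ℝ) : ℂ) := by push_cast; ring
            rw [this, Complex.norm_real, Real.norm_eq_abs]
            have := dist_le_pi_dist θ' θ i
            rw [Real.dist_eq] at this
            have h2 : |θ i - θ' i| = |θ' i - θ i| := abs_sub_comm _ _
            rw [h2]
            linarith
          calc ‖(θ i : ℂ) - θ' i‖ * ‖z‖ ^ (i.1+1)
              ≤ (c / (q+1)) * 1 := by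
                apply mul_le_mul habs (pow_le_one₀ (norm_nonneg _) hz1)
                  (by positivity) (by positivity)
            _ = c / (q+1) := mul_one _
      _ = q * (c / (q+1)) := by
          rw [Finset.sum_const, Finset.card_univ, Fintype.card_fin, nsmul_eq_mul]
  have hq1 : (q : ℝ) * (c / (q+1)) < c := by
    have hd : (q:ℝ)/(q+1) < 1 := by
      rw [div_lt_one (by positivity)]
      linarith
    calc (q:ℝ) * (c / (q+1)) = ((q:ℝ)/(q+1)) * c := by ring
      _ < 1 * c := mul_lt_mul_of_pos_right hd hcpos
      _ = c := one_mul c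
  have : g z ≤ q * (c / (q+1)) := by
    have := hdiff
    rw [hzero, zero_sub, norm_neg] at this
    exact this
  linarith

lemma rows_contAt {q : ℕ} (θ : Fin q → ℝ) : ∀ e,
    (∀ e' < e, |rows q (toSeq θ) e' (q - e')| < 1) → ∀ i,
    ContinuousAt (fun θ' : Fin q → ℝ => rows q (toSeq θ') e i) θ := by
  intro e
  induction e with
  | zero =>
      intro _ i
      show ContinuousAt (fun θ' : Fin q → ℝ => toSeq θ' i) θ
      unfold toSeq
      by_cases h : i - 1 < q
      · simp only [dif_pos h]
        exact (continuous_apply _).continuousAt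
      · simp only [dif_neg h]
        exact continuousAt_const
  | succ e ih =>
      intro h i
      have he : ∀ e' < e, |rows q (toSeq θ) e' (q - e')| < 1 := fun e' h' => h e' (by omega)
      have hdiag := h e (by omega)
      show ContinuousAt (fun θ' : Fin q → ℝ =>
        dstep (q - e) (rows q (toSeq θ') e) i) θ
      unfold dstep
      have c1 := ih he i
      have c2 := ih he (q - e)
      have c3 := ih he (q - e - i)
      apply ContinuousAt.div
      · exact c1.add (c2.mul c3)
      · exact continuousAt_const.sub (c2.pow 2)
      · have := one_sub_sq_ne hdiag
        intro hz
        exact this hz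
  
/-- For `q ≥ 1` and `θ` in the closure of the invertible region: `θ` lies on the frontier
iff some coordinate of `ζ = B⁻(θ)` has `|ζ_i| = 1`; equivalently, `θ ∈ D_θ` iff
`|ζ_i| < 1` for all `i`. -/
theorem boundary_test {q : ℕ} (hq : 1 ≤ q) (θ : Fin q → ℝ)
    (hθ : θ ∈ closure (invRegion q)) :
    (θ ∈ frontier (invRegion q) ↔ ∃ i, |Binv θ i| = 1) ∧
    (θ ∈ invRegion q ↔ ∀ i, |Binv θ i| < 1) := by
  classical
  have hopen := isOpen_invRegion q
  have part2 : θ ∈ invRegion q ↔ ∀ i, |Binv θ i| < 1 := invRegion_iff_binv θ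
  refine ⟨?_, part2⟩
  have hfront : θ ∈ frontier (invRegion q) ↔ θ ∉ invRegion q := by
    rw [frontier, hopen.interior_eq]
    constructor
    · rintro ⟨_, h2⟩; exact h2
    · intro h; exact ⟨hθ, h⟩
  rw [hfront]
  constructor
  · intro hnot
    have hPex : ∃ d, d < q ∧ ¬ |rows q (toSeq θ) d (q - d)| < 1 := by
      by_contra hno
      push_neg at hno
      apply hnot
      apply part2.mpr
      intro i
      have hiq : i.1 < q := i.2
      have hcond : ∀ e < q - (i.1+1), |rows q (toSeq θ) e (q-e)| < 1 :=
        fun e he => hno e (by omega)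
      rw [binv_eq θ i hcond]
      have heq : q - (q - (i.1+1)) = i.1 + 1 := by omega
      have hh := hno (q - (i.1+1)) (by omega)
      rw [heq] at hh
      exact hh
    set d₀ := Nat.find hPex with hd₀def
    have hd₀ := Nat.find_spec hPex
    have hminp : ∀ e < d₀, ¬ (e < q ∧ ¬ |rows q (toSeq θ) e (q - e)| < 1) :=
      fun e he => Nat.find_min hPex he
    obtain ⟨hd₀q, hd₀ge⟩ := hd₀
    have hbelow : ∀ e < d₀, |rows q (toSeq θ) e (q - e)| < 1 := by
      intro e he
      by_contra hcon
      exact hminp e he ⟨by omega, hcon⟩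
    set i₀ : Fin q := ⟨q - d₀ - 1, by omega⟩ with hi₀
    have hi1 : i₀.1 + 1 = q - d₀ := by simp only [hi₀]; omega
    have hqd : q - (i₀.1 + 1) = d₀ := by omega
    have hcond : ∀ e < q - (i₀.1+1), |rows q (toSeq θ) e (q-e)| < 1 := by
      rw [hqd]; exact hbelow
    have hbeq : Binv θ i₀ = rows q (toSeq θ) d₀ (q - d₀) := by
      rw [binv_eq θ i₀ hcond, hqd, hi1]
    have hge : 1 ≤ |Binv θ i₀| := by rw [hbeq]; exact not_lt.mp hd₀ge
    have hcontF : ContinuousAt (fun θ' : Fin q → ℝ => rows q (toSeq θ') d₀ (q - d₀)) θ :=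
      rows_contAt θ d₀ hbelow (q - d₀)
    obtain ⟨u, hu_mem, hu_lim⟩ := mem_closure_iff_seq_limit.mp hθ
    have htend : Filter.Tendsto (fun n => rows q (toSeq (u n)) d₀ (q - d₀)) Filter.atTop
        (nhds (rows q (toSeq θ) d₀ (q - d₀))) := (hcontF.tendsto).comp hu_lim
    have hlt : ∀ n, |rows q (toSeq (u n)) d₀ (q - d₀)| < 1 := by
      intro n
      have hst : Stable q (toSeq (u n)) := (invRegion_iff_stable (u n)).mp (hu_mem n)
      have hall := (schur_cohn q (toSeq (u n))).mp hst
      have hthis := hall (q - d₀) (by omega) (by omega)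
      have heq : q - (q - d₀) = d₀ := by omega
      rw [heq] at hthis
      exact hthis
    have hle1 : |rows q (toSeq θ) d₀ (q - d₀)| ≤ 1 := by
      have habs : Filter.Tendsto (fun n => |rows q (toSeq (u n)) d₀ (q - d₀)|) Filter.atTop
          (nhds (|rows q (toSeq θ) d₀ (q - d₀)|)) :=
        (continuous_abs.tendsto _).comp htend
      exact le_of_tendsto habs (Filter.Eventually.of_forall fun n => le_of_lt (hlt n))
    refine ⟨i₀, le_antisymm ?_ hge⟩
    rw [hbeq]
    exact hle1
  · rintro ⟨i, hi⟩ hmem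
    have := part2.mp hmem i
    rw [hi] at this
    exact lt_irrefl 1 this
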